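/- Let α, β ∈ ℂ satisfy α² ∉ {0,1}, β² ∉ {0,1}, α² ≠ β², α²β² ≠ 1, and let κ₁ ∈ ℂ with κ₁² = −(α−β)²/((1−α²)(1−β²)) and let r ∈ ℂ with r² = (1−α²)(1−β²). If (X, Y) satisfies Y² = X(X−1)(X − (α−β)²/(αβ−1)²) and X ≠ 1, then the point (X₊, Y₊) with X₊ = X/(κ₁²(X−1)) and Y₊ = (1−αβ)·r·Y/((α−β)²(X−1)²) satisfies Y₊² = X₊(1−X₊)(1−κ₁²X₊). -/

import Mathlib

set_option maxRecDepth 8000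
set_option maxHeartbeats 2000000

theorem stmt_5 (α β κ₁ r X Y : ℂ)
    (hα0 : α^2 ≠ 0) (hα1 : α^2 ≠ 1) (hβ0 : β^2 ≠ 0) (hβ1 : β^2 ≠ 1)
    (hαβ : α^2 ≠ β^2) (hαβ1 : α^2 * β^2 ≠ 1)
    (hκ : κ₁^2 = -((α - β)^2) / ((1 - α^2) * (1 - β^2)))
    (hr : r^2 = (1 - α^2) * (1 - β^2))
    (hE : Y^2 = X * (X - 1) * (X - (α - β)^2 / (α * β - 1)^2))
    (hX : X ≠ 1) :
    ((1 - α * β) * r * Y / ((α - β)^2 * (X - 1)^2))^2 =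
      (X / (κ₁^2 * (X - 1))) * (1 - X / (κ₁^2 * (X - 1))) *
      (1 - κ₁^2 * (X / (κ₁^2 * (X - 1)))) := by
  have h1 : (1 : ℂ) - α^2 ≠ 0 := fun h => hα1 (by linear_combination -h)
  have h2 : (1 : ℂ) - β^2 ≠ 0 := fun h => hβ1 (by linear_combination -h)
  have h3 : α - β ≠ 0 := fun h => hαβ (by linear_combination (α + β) * h)
  have h4 : α * β - 1 ≠ 0 := fun h => hαβ1 (by linear_combination (α * β + 1) * h)
  have h5 : X - 1 ≠ 0 := sub_ne_zero.mpr hX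
  have hκ2 : κ₁^2 ≠ 0 := by
    rw [hκ]
    exact div_ne_zero (neg_ne_zero.mpr (pow_ne_zero _ h3)) (mul_ne_zero h1 h2)
  have hk : κ₁^2 * ((1 - α^2) * (1 - β^2)) = -((α - β)^2) := by
    rw [hκ]; field_simp
  have hE' : Y^2 * (α * β - 1)^2 = X * (X - 1) * (X * (α * β - 1)^2 - (α - β)^2) := by
    field_simp at hE; linear_combination hE
  have e1 : (X / (κ₁^2 * (X - 1))) * (1 - X / (κ₁^2 * (X - 1))) *
      (1 - κ₁^2 * (X / (κ₁^2 * (X - 1)))) =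
      -(X * (κ₁^2 * X - κ₁^2 - X)) / (κ₁^2 * κ₁^2 * (X - 1)^3) := by
    have hκ1 : κ₁ ≠ 0 := fun h => hκ2 (by rw [h]; ring)
    field_simp; ring
  rw [e1, div_pow, div_eq_div_iff (pow_ne_zero _ (mul_ne_zero (pow_ne_zero _ h3) (pow_ne_zero _ h5))) (mul_ne_zero (mul_ne_zero hκ2 hκ2) (pow_ne_zero _ h5))]
  linear_combination ((1 - α*β)^2 * Y^2 * κ₁^4 * (X-1)^3) * hr
    + ((1 - α*β)^2 * Y^2 * κ₁^2 * (X-1)^3 - X^2 * (X-1)^4 * (α-β)^2) * hk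
    + (-(κ₁^2 * (X-1)^3 * (α-β)^2)) * hE'
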